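/- Let β < 0, γ > 0, set x_L = 2/(γ − √(γ² − 4β)) and x_R = 2/(γ + √(γ² − 4β)), let x* ∈ ℝ with x* ∉ {x_L, x_R}, and (when (γx* − 1)/β ≥ 0) set x_C = √((γx* − 1)/β). Then: (1) if x* = 1/γ, then x_C = 0; (2) if x_R < x* < 1/γ, then 0 < x_C < x_R; (3) if x_L < x* < x_R, then x_R < x_C < −x_L; (4) if x* < x_L, then −x_L < x_C < −x*. -/

import Mathlib

/-- Lemma 3.3 (saddle case): for `β < 0`, `γ > 0`, with `x_L = 2/(γ − √(γ² − 4β))`,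
`x_R = 2/(γ + √(γ² − 4β))`, `x* ∉ {x_L, x_R}` and `x_C = √((γx* − 1)/β)`:
(1) `x* = 1/γ ⟹ x_C = 0`; (2) `x_R < x* < 1/γ ⟹ 0 < x_C < x_R`;
(3) `x_L < x* < x_R ⟹ x_R < x_C < −x_L`; (4) `x* < x_L ⟹ −x_L < x_C < −x*`. -/
theorem contact_abscissa_saddle (β γ xstar xL xR xC : ℝ)
    (hβ : β < 0) (hγ : 0 < γ)
    (hxL : xL = 2 / (γ - Real.sqrt (γ ^ 2 - 4 * β)))
    (hxR : xR = 2 / (γ + Real.sqrt (γ ^ 2 - 4 * β)))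
    (hneL : xstar ≠ xL) (hneR : xstar ≠ xR)
    (hxC : xC = Real.sqrt ((γ * xstar - 1) / β)) :
    (xstar = 1 / γ → xC = 0) ∧
    (xR < xstar → xstar < 1 / γ → 0 < xC ∧ xC < xR) ∧
    (xL < xstar → xstar < xR → xR < xC ∧ xC < -xL) ∧
    (xstar < xL → -xL < xC ∧ xC < -xstar) := by
  set s := Real.sqrt (γ ^ 2 - 4 * β) with hs
  have hs2 : s ^ 2 = γ ^ 2 - 4 * β := Real.sq_sqrt (by nlinarith)
  have hsγ : γ < s := by nlinarith [Real.sqrt_nonneg (γ ^ 2 - 4 * β)]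
  have hd1 : γ - s ≠ 0 := by linarith
  have hd2 : γ + s ≠ 0 := by positivity
  have hxLneg : xL < 0 := by
    rw [hxL]; exact div_neg_of_pos_of_neg (by norm_num) (by linarith)
  have hxRpos : 0 < xR := by
    rw [hxR]; positivity
  have hxRγ : xR < 1 / γ := by
    rw [hxR, div_lt_div_iff₀ (by positivity) hγ]; nlinarith
  have hVL : β * xL ^ 2 = γ * xL - 1 := by
    rw [hxL]; field_simp; nlinarith [hs2]
  have hVR : β * xR ^ 2 = γ * xR - 1 := by
    rw [hxR]; field_simp; nlinarith [hs2]
  refine ⟨?_, ?_, ?_, ?_⟩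
  · intro h
    rw [hxC, h]
    have : γ * (1 / γ) - 1 = 0 := by field_simp; ring
    rw [this, zero_div, Real.sqrt_zero]
  · intro h1 h2
    have hnum : γ * xstar - 1 < 0 := by
      have h' : γ * (1 / γ) = 1 := by field_simp
      nlinarith [mul_lt_mul_of_pos_left h2 hγ]
    constructor
    · rw [hxC]
      exact Real.sqrt_pos.mpr (div_pos_of_neg_of_neg hnum hβ)
    · rw [hxC, Real.sqrt_lt' hxRpos, div_lt_iff_of_neg hβ]
      nlinarith
  · intro h1 h2
    constructor
    · rw [hxC, Real.lt_sqrt hxRpos.le, lt_div_iff_of_neg hβ]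
      nlinarith
    · rw [hxC, Real.sqrt_lt' (by linarith : (0:ℝ) < -xL), div_lt_iff_of_neg hβ]
      nlinarith
  · intro h1
    constructor
    · rw [hxC, Real.lt_sqrt (by linarith : (0:ℝ) ≤ -xL), lt_div_iff_of_neg hβ]
      nlinarith
    · have hdiff : (0:ℝ) < xL - xstar := by linarith
      have P1 : 0 < (xL - xstar) * ((-β) * (-xL)) := by
        apply mul_pos hdiff
        apply mul_pos <;> linarith
      have haux : 0 < β * (xstar + xL) - γ := by nlinarith [hVL, P1]
      have hVs : β * xstar ^ 2 - γ * xstar + 1 < 0 := by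
        nlinarith [hVL, mul_pos hdiff haux]
      rw [hxC, Real.sqrt_lt' (by linarith : (0:ℝ) < -xstar), div_lt_iff_of_neg hβ]
      have hsq : (-xstar) ^ 2 = xstar ^ 2 := by ring
      rw [hsq]; linarith
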